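/- arXiv:2509.06697 — 2 statements merged into one kernel-verified Lean document; each statement's English description precedes it below -/
import Mathlib

section
/- Suppose |ψ₁| < 1, |g(y,e)| ≤ A for all y, e ∈ ℝ (bounded nonlinear part), and the noise ε has mean zero and E[ε²] = s² < ∞, with ε independent of (y,e). Define V(y) = 1 + y². Then there exist δ ∈ (0,1) and a function B(e) = b₀ + b₁ e² with finite constants b₀, b₁ ≥ 0 such that for all y, e ∈ ℝ: E[V(ψ₁ y + ψ₂ e + g(y,e) + ε)] ≤ (1-δ) V(y) + B(e). -/
open MeasureTheory

theorem narfima_drift_condition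
    {Ω : Type*} [MeasurableSpace Ω] (μ : Measure Ω) [IsProbabilityMeasure μ]
    (ψ₁ ψ₂ : ℝ) (hψ : |ψ₁| < 1)
    (g : ℝ → ℝ → ℝ) (A : ℝ) (hA : 0 < A) (hg : ∀ y e : ℝ, |g y e| ≤ A)
    (ε : Ω → ℝ) (s : ℝ)
    (hε1 : Integrable ε μ) (hε2 : Integrable (fun ω => ε ω ^ 2) μ)
    (hmean : ∫ ω, ε ω ∂μ = 0) (hvar : ∫ ω, ε ω ^ 2 ∂μ = s ^ 2) :
    ∃ δ : ℝ, 0 < δ ∧ δ < 1 ∧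
      ∃ b₀ b₁ : ℝ, 0 ≤ b₀ ∧ 0 ≤ b₁ ∧
        ∀ y e : ℝ,
          (∫ ω, (1 + (ψ₁ * y + ψ₂ * e + g y e + ε ω) ^ 2) ∂μ)
            ≤ (1 - δ) * (1 + y ^ 2) + (b₀ + b₁ * e ^ 2) := by
  have hψ2 : ψ₁ ^ 2 < 1 := by
    have := abs_nonneg ψ₁
    nlinarith [sq_abs ψ₁]
  set δ : ℝ := (1 - ψ₁ ^ 2) / 2 with hδdef
  have hδpos : 0 < δ := by simp only [hδdef]; linarith
  have hδlt : δ < 1 := by simp only [hδdef]; nlinarith [sq_nonneg ψ₁]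
  have h1δ : (1 : ℝ) - δ = ψ₁ ^ 2 + δ := by simp only [hδdef]; ring
  set K : ℝ := 1 + ψ₁ ^ 2 / δ with hKdef
  have hKpos : 0 < K := by positivity
  have hKδ : K * δ = ψ₁ ^ 2 + δ := by
    field_simp [hKdef]
    rw [hKdef, add_mul, div_mul_cancel₀ _ hδpos.ne']; ring
  have hs2 : 0 ≤ s ^ 2 := by rw [← hvar]; positivity
  have hint : ∀ c : ℝ, (∫ ω, (1 + (c + ε ω) ^ 2) ∂μ) = 1 + c ^ 2 + s ^ 2 := by
    intro c
    have h1 : ∀ ω, 1 + (c + ε ω) ^ 2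
        = (1 + c ^ 2 + 2 * c * ε ω) + ε ω ^ 2 := by intro ω; ring
    have i2 : Integrable (fun ω => 2 * c * ε ω) μ := hε1.const_mul _
    have i1 : Integrable (fun ω => 1 + c ^ 2 + 2 * c * ε ω) μ :=
      (integrable_const _).add i2
    simp_rw [h1]
    rw [integral_add i1 hε2, integral_add (integrable_const _) i2,
      integral_const, integral_const_mul, hmean, hvar]
    simp
  refine ⟨δ, hδpos, hδlt, 1 + 2 * K * A ^ 2 + s ^ 2, 2 * K * ψ₂ ^ 2, ?_, ?_, ?_⟩
  · nlinarith [sq_nonneg A]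
  · positivity
  · intro y e
    rw [show (fun ω => 1 + (ψ₁ * y + ψ₂ * e + g y e + ε ω) ^ 2)
        = fun ω => 1 + ((ψ₁ * y + ψ₂ * e + g y e) + ε ω) ^ 2 from rfl,
      hint (ψ₁ * y + ψ₂ * e + g y e)]
    have hg2 : (g y e) ^ 2 ≤ A ^ 2 := by
      have := abs_le.mp (hg y e)
      nlinarith
    have hd2 : (ψ₂ * e + g y e) ^ 2 ≤ 2 * ψ₂ ^ 2 * e ^ 2 + 2 * A ^ 2 := by
      nlinarith [sq_nonneg (ψ₂ * e - g y e)]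
    have hprod := mul_le_mul_of_nonneg_left hd2 (show (0:ℝ) ≤ ψ₁ ^ 2 + δ by positivity)
    have hmul : δ * (ψ₁ * y + ψ₂ * e + g y e) ^ 2
        ≤ δ * ((1 - δ) * y ^ 2 + 2 * K * ψ₂ ^ 2 * e ^ 2 + 2 * K * A ^ 2) := by
      have hrhs : δ * ((1 - δ) * y ^ 2 + 2 * K * ψ₂ ^ 2 * e ^ 2 + 2 * K * A ^ 2)
          = δ * (ψ₁ ^ 2 + δ) * y ^ 2 + (ψ₁ ^ 2 + δ) * (2 * ψ₂ ^ 2 * e ^ 2 + 2 * A ^ 2) := by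
        rw [h1δ, ← hKδ]; ring
      rw [hrhs]
      nlinarith [sq_nonneg (δ * y - ψ₁ * (ψ₂ * e + g y e)), hprod]
    have hkey : (ψ₁ * y + ψ₂ * e + g y e) ^ 2
        ≤ (1 - δ) * y ^ 2 + 2 * K * ψ₂ ^ 2 * e ^ 2 + 2 * K * A ^ 2 :=
      le_of_mul_le_mul_left hmul hδpos
    nlinarith
end

section
/- Suppose scalars β₀, β₁, …, β_k, μ₁, …, μ_k and nonzero φ₁, …, φ_k satisfy β₀ + Σ_{i=1}^k β_i σ(φ_i x + μ_i) = 0 for all x ∈ ℝ, where σ is the logistic sigmoid and the pairs (φ_i, μ_i) are pairwise distinct with φ_i > 0. Then β₀ = β₁ = ⋯ = β_k = 0. -/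
noncomputable def logisticSigmoid (x : ℝ) : ℝ := 1 / (1 + Real.exp (-x))

open Complex Filter Topology Finset

private lemma ofReal_sigmoid (y : ℝ) :
    ((logisticSigmoid y : ℝ) : ℂ) = (1 + Complex.exp (-(y : ℂ)))⁻¹ := by
  rw [logisticSigmoid, one_div]
  push_cast
  norm_num

private lemma sigmoid_aux (k : ℕ) (β φ μ : Fin k → ℝ) (hφ : ∀ i, 0 < φ i)
    (hdist : ∀ i j : Fin k, (φ i, μ i) = (φ j, μ j) → i = j) :
    ∀ S : Finset (Fin k), ∀ c : ℝ,
      (∀ x : ℝ, c + ∑ i ∈ S, β i * logisticSigmoid (φ i * x + μ i) = 0) →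
      ∀ i ∈ S, β i = 0 := by
  intro S
  induction S using Finset.strongInduction with
  | _ S IH =>
  intro c hzero i₀ hi₀
  obtain ⟨j, hjS, hjmax⟩ := S.exists_max_image φ ⟨i₀, hi₀⟩
  set d : Fin k → ℂ → ℂ := fun i z => 1 + Complex.exp (-((φ i : ℂ) * z + (μ i : ℂ))) with hd
  set F : ℂ → ℂ := fun z => (c : ℂ) + ∑ i ∈ S, (β i : ℂ) * (d i z)⁻¹ with hF
  set B : Set ℂ := ⋃ i ∈ S, {z : ℂ | d i z = 0} with hB
  have hdc : ∀ i, Continuous (d i) := by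
    intro i; simp only [hd]; fun_prop
  have hmemU : ∀ z : ℂ, z ∈ Bᶜ ↔ ∀ i ∈ S, d i z ≠ 0 := by
    intro z; simp [hB]
  have hBclosed : IsClosed B := by
    apply S.finite_toSet.isClosed_biUnion
    intro i _
    exact isClosed_eq (hdc i) continuous_const
  have hopen : IsOpen Bᶜ := hBclosed.isOpen_compl
  have hBcount : B.Countable := by
    apply Set.Countable.biUnion S.countable_toSet
    intro i _
    apply Set.Countable.mono _ (Set.countable_range
      (fun n : ℤ => ((-(μ i) : ℂ) - (2 * n + 1) * Real.pi * I) / (φ i)))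
    intro z hz
    have hφi : ((φ i : ℝ) : ℂ) ≠ 0 := by exact_mod_cast (hφ i).ne'
    have hz' : Complex.exp (-((φ i : ℂ) * z + (μ i : ℂ))) = -1 := by
      have h2 := hz
      simp only [hd, Set.mem_setOf_eq] at h2
      linear_combination h2
    have h1 : Complex.exp (-((φ i : ℂ) * z + (μ i : ℂ)) - Real.pi * I) = 1 := by
      rw [Complex.exp_sub, hz', Complex.exp_pi_mul_I]
      norm_num
    obtain ⟨n, hn⟩ := Complex.exp_eq_one_iff.mp h1
    refine ⟨n, ?_⟩
    rw [div_eq_iff hφi]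
    linear_combination hn
  have hpre : IsPreconnected Bᶜ := by
    have hrank : 1 < Module.rank ℝ ℂ := by
      rw [Complex.rank_real_complex]; norm_num
    exact (hBcount.isPathConnected_compl_of_one_lt_rank hrank).isConnected.isPreconnected
  have hreal : ∀ x : ℝ, ((x : ℝ) : ℂ) ∈ Bᶜ := by
    intro x
    rw [hmemU]
    intro i _
    have hcast : d i ((x : ℝ) : ℂ) = ((1 + Real.exp (-(φ i * x + μ i)) : ℝ) : ℂ) := by
      simp only [hd]; push_cast; ring_nf
    rw [hcast]
    have hpos : (0 : ℝ) < 1 + Real.exp (-(φ i * x + μ i)) := by positivity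
    exact_mod_cast hpos.ne'
  have hdiff : DifferentiableOn ℂ F Bᶜ := by
    intro z hz
    apply DifferentiableAt.differentiableWithinAt
    rw [hF]
    apply DifferentiableAt.const_add
    apply DifferentiableAt.fun_sum
    intro i hi
    apply DifferentiableAt.const_mul
    apply DifferentiableAt.inv _ ((hmemU z).mp hz i hi)
    simp only [hd]
    fun_prop
  have hAn : AnalyticOnNhd ℂ F Bᶜ := hdiff.analyticOnNhd hopen
  have hFreal : ∀ x : ℝ, F ((x : ℝ) : ℂ) = 0 := by
    intro x
    have hterm : ∀ i, (β i : ℂ) * (d i ((x : ℝ) : ℂ))⁻¹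
        = ((β i * logisticSigmoid (φ i * x + μ i) : ℝ) : ℂ) := by
      intro i
      rw [Complex.ofReal_mul, ofReal_sigmoid]
      congr 2
      simp only [hd]; push_cast; ring
    rw [hF]
    simp only [hterm]
    rw [← Complex.ofReal_sum, ← Complex.ofReal_add, hzero x, Complex.ofReal_zero]
  set t : ℕ → ℝ := fun n => ((n : ℝ) + 1)⁻¹ with ht
  have htpos : ∀ n, 0 < t n := by intro n; rw [ht]; positivity
  have htinv : Tendsto t atTop (𝓝 0) := by
    rw [ht]
    apply tendsto_inv_atTop_zero.comp
    exact tendsto_atTop_add_const_right _ 1 tendsto_natCast_atTop_atTop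
  have htC : Tendsto (fun n : ℕ => ((t n : ℝ) : ℂ)) atTop (𝓝 0) := by
    have := (Complex.continuous_ofReal.tendsto 0).comp htinv
    simpa [Function.comp_def] using this
  have hfreq : ∃ᶠ z in 𝓝[≠] (0 : ℂ), F z = 0 := by
    have hseq : Tendsto (fun n : ℕ => ((t n : ℝ) : ℂ)) atTop (𝓝[≠] (0 : ℂ)) := by
      apply tendsto_nhdsWithin_of_tendsto_nhds_of_eventually_within _ htC
      exact Eventually.of_forall fun n =>
        Complex.ofReal_ne_zero.mpr (htpos n).ne'
    exact hseq.frequently (Eventually.of_forall fun n => hFreal _).frequently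
  have hEq : Set.EqOn F 0 Bᶜ := by
    apply hAn.eqOn_zero_of_preconnected_of_frequently_eq_zero hpre _ hfreq
    simpa using hreal 0
  -- the pole point of the term with maximal φ
  have hφj : ((φ j : ℝ) : ℂ) ≠ 0 := by exact_mod_cast (hφ j).ne'
  set p : ℂ := ((Real.pi : ℂ) * I - (μ j : ℂ)) / (φ j : ℂ) with hp
  have hpj : (φ j : ℂ) * p + (μ j : ℂ) = (Real.pi : ℂ) * I := by
    rw [hp]; field_simp; ring
  have hkey : ∀ i ∈ S, i ≠ j → d i p ≠ 0 := by
    intro i hi hij h0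
    simp only [hd] at h0
    have hexp : Complex.exp (-((φ i : ℂ) * p + (μ i : ℂ))) = -1 := by linear_combination h0
    have h1 : Complex.exp (-((φ i : ℂ) * p + (μ i : ℂ)) - Real.pi * I) = 1 := by
      rw [Complex.exp_sub, hexp, Complex.exp_pi_mul_I]; norm_num
    obtain ⟨n, hn⟩ := Complex.exp_eq_one_iff.mp h1
    have h2 : (((φ i + (2 * (n : ℝ) + 1) * φ j) * Real.pi : ℝ) : ℂ) * I
        = ((φ i * μ j - φ j * μ i : ℝ) : ℂ) := by
      push_cast
      linear_combination (-(φ j : ℂ)) * hn - (φ i : ℂ) * hpj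
    have hRe0 := congrArg Complex.re h2
    have hIm0 := congrArg Complex.im h2
    simp only [Complex.mul_re, Complex.mul_im, Complex.I_re, Complex.I_im,
      Complex.ofReal_re, Complex.ofReal_im, mul_zero, mul_one, zero_mul, zero_sub,
      zero_add, sub_zero, neg_zero, add_zero, neg_eq_zero] at hRe0 hIm0
    have hb : φ i + (2 * (n : ℝ) + 1) * φ j = 0 := by
      rcases mul_eq_zero.mp hIm0 with h | h
      · exact h
      · exact absurd h Real.pi_ne_zero
    have ha : φ i * μ j - φ j * μ i = 0 := by linarith [hRe0]
    have hm1 : ((2 * n + 1 : ℤ) : ℝ) * φ j = -φ i := by push_cast; linarith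
    have hmneg : (2 * n + 1 : ℤ) < 0 := by
      by_contra hcon
      push_neg at hcon
      have : (0 : ℝ) ≤ ((2 * n + 1 : ℤ) : ℝ) := by exact_mod_cast hcon
      nlinarith [hφ i, hφ j]
    have hmle : (-1 : ℤ) ≤ 2 * n + 1 := by
      by_contra hcon
      push_neg at hcon
      have h3 : (2 * n + 1 : ℤ) ≤ -2 := by omega
      have h4 : ((2 * n + 1 : ℤ) : ℝ) ≤ -2 := by exact_mod_cast h3
      have hle := hjmax i hi
      nlinarith [hφ i, hφ j]
    have hmeq : (2 * n + 1 : ℤ) = -1 := by omega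
    have hφeq : φ i = φ j := by
      rw [hmeq] at hm1
      push_cast at hm1
      linarith
    have hμeq : μ i = μ j := by
      rw [hφeq] at ha
      have hne := (hφ j).ne'
      have h2' : φ j * (μ j - μ i) = 0 := by linarith
      rcases mul_eq_zero.mp h2' with h | h
      · exact absurd h hne
      · linarith
    exact hij (hdist i j (by rw [hφeq, hμeq]))
  -- sequence approaching p from the right
  set z : ℕ → ℂ := fun n => p + ((t n : ℝ) : ℂ) with hzdef
  have hztend : Tendsto z atTop (𝓝 p) := by
    have h3 := Tendsto.add (tendsto_const_nhds : Tendsto (fun _ : ℕ => p) atTop (𝓝 p)) htC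
    simpa [hzdef] using h3
  have harg : ∀ n, (φ j : ℂ) * z n + (μ j : ℂ) = (Real.pi : ℂ) * I + ((φ j * t n : ℝ) : ℂ) := by
    intro n
    rw [hzdef]
    push_cast
    linear_combination hpj
  have hdj : ∀ n, d j (z n) = ((1 - Real.exp (-(φ j * t n)) : ℝ) : ℂ) := by
    intro n
    simp only [hd]
    rw [harg n, neg_add, Complex.exp_add]
    have hneg1 : Complex.exp (-((Real.pi : ℂ) * I)) = -1 := by
      rw [Complex.exp_neg, Complex.exp_pi_mul_I]; norm_num
    rw [hneg1]
    push_cast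
    ring
  have hsval : ∀ n, 0 < 1 - Real.exp (-(φ j * t n)) := by
    intro n
    have hlt : Real.exp (-(φ j * t n)) < 1 := by
      apply Real.exp_lt_one_iff.mpr
      have := mul_pos (hφ j) (htpos n)
      linarith
    linarith
  have hdjne : ∀ n, d j (z n) ≠ 0 := by
    intro n
    rw [hdj n]
    exact_mod_cast (hsval n).ne'
  have hmem : ∀ᶠ n in atTop, z n ∈ Bᶜ := by
    have hall : ∀ i ∈ S, ∀ᶠ n in atTop, d i (z n) ≠ 0 := by
      intro i hi
      by_cases hij : i = j
      · subst hij; exact Eventually.of_forall hdjne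
      · have hc : Tendsto (fun n => d i (z n)) atTop (𝓝 (d i p)) :=
          ((hdc i).tendsto p).comp hztend
        exact hc.eventually_ne (hkey i hi hij)
    have := S.eventually_all.mpr hall
    filter_upwards [this] with n hn
    exact (hmemU (z n)).mpr hn
  have hFz : ∀ᶠ n in atTop, (β j : ℂ) * (d j (z n))⁻¹
      = -((c : ℂ) + ∑ i ∈ S.erase j, (β i : ℂ) * (d i (z n))⁻¹) := by
    filter_upwards [hmem] with n hn
    have h0 : F (z n) = 0 := hEq hn
    simp only [hF] at h0
    have hsplit := Finset.add_sum_erase S (fun i => (β i : ℂ) * (d i (z n))⁻¹) hjS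
    linear_combination h0 + hsplit
  set L : ℂ := -((c : ℂ) + ∑ i ∈ S.erase j, (β i : ℂ) * (d i p)⁻¹) with hL
  have hGlim : Tendsto (fun n => -((c : ℂ) + ∑ i ∈ S.erase j, (β i : ℂ) * (d i (z n))⁻¹))
      atTop (𝓝 L) := by
    rw [hL]
    apply Tendsto.neg
    apply Tendsto.const_add
    apply tendsto_finset_sum
    intro i hi
    obtain ⟨hij, hiS⟩ := Finset.mem_erase.mp hi
    exact Tendsto.mul tendsto_const_nhds
      ((((hdc i).tendsto p).comp hztend).inv₀ (hkey i hiS hij))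
  have hβj : β j = 0 := by
    by_contra hβj
    have hβjc : (β j : ℂ) ≠ 0 := by exact_mod_cast hβj
    set s : ℕ → ℝ := fun n => (1 - Real.exp (-(φ j * t n)))⁻¹ with hs
    have hsC : ∀ᶠ n in atTop, ((s n : ℝ) : ℂ)
        = -((c : ℂ) + ∑ i ∈ S.erase j, (β i : ℂ) * (d i (z n))⁻¹) / (β j : ℂ) := by
      filter_upwards [hFz] with n hn
      have hdinv : ((s n : ℝ) : ℂ) = (d j (z n))⁻¹ := by
        rw [hdj n, hs]
        push_cast
        simp
      rw [hdinv, eq_div_iff hβjc]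
      linear_combination hn
    have hsTend : Tendsto (fun n => ((s n : ℝ) : ℂ)) atTop (𝓝 (L / (β j : ℂ))) := by
      refine Tendsto.congr' ?_ (hGlim.div_const _)
      filter_upwards [hsC] with n hn
      exact hn.symm
    have hsRe : Tendsto s atTop (𝓝 ((L / (β j : ℂ)).re)) := by
      have := (Complex.continuous_re.tendsto _).comp hsTend
      simpa [Function.comp_def] using this
    have hsTop : Tendsto s atTop atTop := by
      have hinner : Tendsto (fun n => 1 - Real.exp (-(φ j * t n))) atTop (𝓝[>] (0 : ℝ)) := by
        apply tendsto_nhdsWithin_of_tendsto_nhds_of_eventually_within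
        · have h1 : Tendsto (fun n => φ j * t n) atTop (𝓝 0) := by
            have := Tendsto.const_mul (φ j) htinv
            simpa using this
          have h2 : Tendsto (fun n => Real.exp (-(φ j * t n))) atTop (𝓝 1) := by
            have h1' : Tendsto (fun n => -(φ j * t n)) atTop (𝓝 0) := by simpa using h1.neg
            have := (Real.continuous_exp.tendsto 0).comp h1'
            simpa [Function.comp_def] using this
          have h3 := Tendsto.sub (tendsto_const_nhds : Tendsto (fun _ : ℕ => (1:ℝ)) atTop (𝓝 1)) h2
          simpa using h3
        · exact Eventually.of_forall fun n => Set.mem_Ioi.mpr (hsval n)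
      have := hinner.inv_tendsto_nhdsGT_zero
      simpa [hs, Pi.inv_def] using this
    exact not_tendsto_atTop_of_tendsto_nhds hsRe hsTop
  rcases eq_or_ne i₀ j with h | h
  · rw [h]; exact hβj
  · refine IH (S.erase j) (Finset.erase_ssubset hjS) c ?_ i₀ (Finset.mem_erase.mpr ⟨h, hi₀⟩)
    intro x
    have hx := hzero x
    rw [← Finset.add_sum_erase S _ hjS, hβj] at hx
    simpa using hx

theorem sigmoid_linear_independence
    (k : ℕ) (β₀ : ℝ) (β φ μ : Fin k → ℝ)
    (hφ : ∀ i, 0 < φ i)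
    (hdist : ∀ i j : Fin k, (φ i, μ i) = (φ j, μ j) → i = j)
    (hzero : ∀ x : ℝ, β₀ + ∑ i : Fin k, β i * logisticSigmoid (φ i * x + μ i) = 0) :
    β₀ = 0 ∧ ∀ i, β i = 0 := by
  have h := sigmoid_aux k β φ μ hφ hdist Finset.univ β₀ (by intro x; simpa using hzero x)
  have hβ : ∀ i, β i = 0 := fun i => h i (Finset.mem_univ i)
  refine ⟨?_, hβ⟩
  simpa [hβ] using hzero 0
end
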